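/- Let F = F_{a,v} be a Misiurewicz cubic map with data (ℓ, m, a_0): the marked critical point a is periodic under F, the free critical point −a is not periodic, a_0 = F^{∘ℓ}(2a) with ℓ ≥ 1, F^{∘m}(a_0) = a_0, and |(F^{∘m})′(a_0)| > 1. Then (F^{∘ℓ})′(2a) ≠ 0; equivalently, the forward orbit 2a, F(2a), …, F^{∘(ℓ−1)}(2a) avoids both critical points a and −a of F. -/

import Mathlib

open Complex Metric Filter Function

noncomputable def Fav (a v : ℂ) : ℂ → ℂ := fun z => z ^ 3 - 3 * a ^ 2 * z + (2 * a ^ 3 + v)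

def filledJulia (F : ℂ → ℂ) : Set ℂ :=
  {z : ℂ | Bornology.IsBounded (Set.range fun n : ℕ => F^[n] z)}

def window (A : Set ℂ) (r : ℝ) : Set ℂ :=
  (A ∩ Metric.closedBall (0 : ℂ) r) ∪ Metric.sphere (0 : ℂ) r

structure IsMisiurewicz (a v : ℂ) (l m : ℕ) (a0 : ℂ) : Prop where
  marked_periodic : ∃ p : ℕ, 1 ≤ p ∧ (Fav a v)^[p] a = a
  free_not_periodic : ∀ n : ℕ, 1 ≤ n → (Fav a v)^[n] (-a) ≠ -a
  hl : 1 ≤ l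
  hm : 1 ≤ m
  ha0 : (Fav a v)^[l] (2 * a) = a0
  hper : (Fav a v)^[m] a0 = a0
  hrep : 1 < ‖deriv ((Fav a v)^[m]) a0‖

lemma hasDerivAt_Fav (a v z : ℂ) : HasDerivAt (Fav a v) (3 * z ^ 2 - 3 * a ^ 2) z := by
  have h := ((hasDerivAt_pow 3 z).sub ((hasDerivAt_id z).const_mul (3 * a ^ 2))).add_const
    (2 * a ^ 3 + v)
  exact h.congr_deriv (by push_cast; ring)

lemma deriv_Fav (a v z : ℂ) : deriv (Fav a v) z = 3 * z ^ 2 - 3 * a ^ 2 :=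
  (hasDerivAt_Fav a v z).deriv

lemma diff_Fav (a v : ℂ) : Differentiable ℂ (Fav a v) :=
  fun z => (hasDerivAt_Fav a v z).differentiableAt

lemma deriv_iter (F : ℂ → ℂ) (hF : Differentiable ℂ F) (n : ℕ) (x : ℂ) :
    deriv (F^[n]) x = ∏ i ∈ Finset.range n, deriv F (F^[i] x) := by
  induction n with
  | zero => simp
  | succ n ih =>
    rw [Function.iterate_succ', Finset.prod_range_succ,
      deriv_comp x hF.differentiableAt (hF.iterate n).differentiableAt, ih, mul_comm]

lemma Fav_2a (a v : ℂ) : Fav a v (2 * a) = Fav a v (-a) := by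
  simp only [Fav]; ring

theorem stmt14 (a v : ℂ) (l m : ℕ) (a0 : ℂ) (hmis : IsMisiurewicz a v l m a0) :
    deriv ((Fav a v)^[l]) (2 * a) ≠ 0 ∧
    ∀ j : ℕ, j < l → (Fav a v)^[j] (2 * a) ≠ a ∧ (Fav a v)^[j] (2 * a) ≠ -a := by
  set F := Fav a v with hF
  obtain ⟨p, hp1, hpa⟩ := hmis.marked_periodic
  -- a ≠ 0
  have ha : a ≠ 0 := by
    intro h
    exact hmis.free_not_periodic p hp1 (by rw [h] at hpa ⊢; simpa using hpa)
  -- for j ≥ 1, F^[j](2a) = F^[j](-a)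
  have hiter : ∀ j : ℕ, 1 ≤ j → F^[j] (2 * a) = F^[j] (-a) := by
    intro j hj
    obtain ⟨k, rfl⟩ := Nat.exists_eq_add_of_le hj
    rw [add_comm, Function.iterate_add_apply, Function.iterate_add_apply]
    rw [show F^[1] (2 * a) = F^[1] (-a) by simpa using Fav_2a a v]
  have key : ∀ j : ℕ, j < l → F^[j] (2 * a) ≠ a ∧ F^[j] (2 * a) ≠ -a := by
    intro j hjl
    constructor
    · -- suppose F^[j](2a) = a
      intro hEq
      -- a0 = F^[l-j](a)
      have hk : 1 ≤ l - j := Nat.le_sub_of_add_le (by omega)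
      set k := l - j with hkdef
      have ha0a : F^[k] a = a0 := by
        rw [← hEq, ← Function.iterate_add_apply]
        have : k + j = l := by omega
        rw [this]; exact hmis.ha0
      -- F^[p*k](a) = a
      have hpk : ∀ t : ℕ, F^[p * t] a = a := by
        intro t
        induction t with
        | zero => simp
        | succ t ih => rw [Nat.mul_succ, Function.iterate_add_apply, hpa, ih]
      -- e := p*k - k ; F^[e](a0) = a
      have hkpk : k ≤ p * k := Nat.le_mul_of_pos_left k hp1
      have he : F^[p * k - k] a0 = a := by
        rw [← ha0a, ← Function.iterate_add_apply, Nat.sub_add_cancel hkpk, hpk k]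
      -- reduce mod m
      have hmul : ∀ q : ℕ, F^[m * q] a0 = a0 := by
        intro q
        induction q with
        | zero => simp
        | succ q ih => rw [Nat.mul_succ, Function.iterate_add_apply, hmis.hper, ih]
      set e := p * k - k with hedef
      set s := e % m with hsdef
      have hs : F^[s] a0 = a := by
        rw [← he]
        conv_rhs => rw [show e = s + m * (e / m) from (Nat.mod_add_div e m).symm]
        rw [Function.iterate_add_apply, hmul]
      have hsm : s < m := Nat.mod_lt _ hmis.hm
      -- deriv F^[m] a0 = 0
      have hder : deriv (F^[m]) a0 = 0 := by
        rw [deriv_iter F (diff_Fav a v) m a0]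
        apply Finset.prod_eq_zero (Finset.mem_range.mpr hsm)
        rw [hs, deriv_Fav]; ring
      exact absurd hmis.hrep (by rw [hder]; simp)
    · intro hEq
      rcases Nat.eq_zero_or_pos j with rfl | hj1
      · simp only [Function.iterate_zero, id] at hEq
        exact ha (by linear_combination (hEq) / 3)
      · exact hmis.free_not_periodic j hj1 (by rw [← hiter j hj1]; exact hEq)
  refine ⟨?_, key⟩
  rw [deriv_iter F (diff_Fav a v) l (2 * a)]
  apply Finset.prod_ne_zero_iff.mpr
  intro i hi
  rw [deriv_Fav]
  obtain ⟨h1, h2⟩ := key i (Finset.mem_range.mp hi)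
  intro h
  have : (F^[i] (2 * a) - a) * (F^[i] (2 * a) + a) = 0 := by linear_combination h / 3
  rcases mul_eq_zero.mp this with h' | h'
  · exact h1 (by linear_combination h')
  · exact h2 (by linear_combination h')
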